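/- Let (𝒜, ℬ, 𝒞) be a recollement of abelian categories and let 𝒴 be a wakamatsu tilting subcategory of ℬ. If i^! is exact, i_* i^!(⊥𝒴) ⊆ 𝒴, and j_* j^*(𝒴) ⊆ 𝒴, then i^!(𝒴) and j^*(𝒴) are wakamatsu tilting subcategories of 𝒜 and 𝒞, respectively. -/

import Mathlib

open CategoryTheory Limits Abelian

universe w₁ w₂ w₃ v₁ v₂ v₃ u₁ u₂ u₃

/-- A recollement of abelian categories. Exactness conditions on the six functors
(`i_*`, `j^*` exact; `i^*`, `j_!` right exact; `i^!`, `j_*` left exact) are automatic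
from the adjunctions. -/
structure Recollement (𝒜 : Type u₁) (ℬ : Type u₂) (𝒞 : Type u₃)
    [Category.{v₁} 𝒜] [Category.{v₂} ℬ] [Category.{v₃} 𝒞]
    [Abelian 𝒜] [Abelian ℬ] [Abelian 𝒞] where
  /-- `i_* : 𝒜 ⥤ ℬ` -/
  iStar : 𝒜 ⥤ ℬ
  /-- `i^* : ℬ ⥤ 𝒜` -/
  iUS : ℬ ⥤ 𝒜
  /-- `i^! : ℬ ⥤ 𝒜` -/
  iUE : ℬ ⥤ 𝒜
  /-- `j^* : ℬ ⥤ 𝒞` -/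
  jUS : ℬ ⥤ 𝒞
  /-- `j_! : 𝒞 ⥤ ℬ` -/
  jLE : 𝒞 ⥤ ℬ
  /-- `j_* : 𝒞 ⥤ ℬ` -/
  jLS : 𝒞 ⥤ ℬ
  /-- the adjunction `(i^*, i_*)` -/
  adj₁ : iUS ⊣ iStar
  /-- the adjunction `(i_*, i^!)` -/
  adj₂ : iStar ⊣ iUE
  /-- the adjunction `(j_!, j^*)` -/
  adj₃ : jLE ⊣ jUS
  /-- the adjunction `(j^*, j_*)` -/
  adj₄ : jUS ⊣ jLS
  iStar_full : iStar.Full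
  iStar_faithful : iStar.Faithful
  jLE_full : jLE.Full
  jLE_faithful : jLE.Faithful
  jLS_full : jLS.Full
  jLS_faithful : jLS.Faithful
  /-- `Im i_* = Ker j^*` -/
  essImage_iStar : ∀ X : ℬ, iStar.essImage X ↔ IsZero (jUS.obj X)

variable {𝒟 : Type u₁} [Category.{v₁} 𝒟] [Abelian 𝒟]

/-- a subcategory (given by a set of objects) closed under isomorphisms and (finite) direct
sums. -/
def IsGoodSubcat (S : Set 𝒟) : Prop :=
  (∀ ⦃X Y : 𝒟⦄, (X ≅ Y) → X ∈ S → Y ∈ S) ∧ ∀ X Y : 𝒟, X ∈ S → Y ∈ S → (X ⊞ Y) ∈ S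

/-- exactness at `Y` of `X ⟶ Y ⟶ Z`. -/
def ExactAt {X Y Z : 𝒟} (f : X ⟶ Y) (g : Y ⟶ Z) : Prop :=
  ∃ w : f ≫ g = 0, (ShortComplex.mk f g w).Exact

section Ext
variable [HasExt.{w₁} 𝒟]

/-- `⊥S`: objects `M` with `Ext^i(M, N) = 0` for all `i ≥ 1`, `N ∈ S`. -/
def leftPerp (S : Set 𝒟) : Set 𝒟 :=
  {M | ∀ N ∈ S, ∀ i : ℕ, 1 ≤ i → Subsingleton (Ext M N i)}

/-- a self-orthogonal subcategory. -/
def SelfOrthogonal (S : Set 𝒟) : Prop :=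
  ∀ M ∈ S, ∀ N ∈ S, ∀ i : ℕ, 1 ≤ i → Subsingleton (Ext M N i)

/-- The subcategory `X_S` : objects `M ∈ ⊥S` admitting an exact sequence
`0 ⟶ M ⟶ W 0 ⟶ W 1 ⟶ ⋯` with all `W i ∈ S` and images of differentials in `⊥S`. -/
def wakClass (S : Set 𝒟) : Set 𝒟 :=
  {M | M ∈ leftPerp S ∧ ∃ (W : ℕ → 𝒟) (f : M ⟶ W 0) (d : ∀ n, W n ⟶ W (n + 1)),
    (∀ n, W n ∈ S) ∧ Mono f ∧ ExactAt f (d 0) ∧ (∀ n, ExactAt (d n) (d (n + 1))) ∧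
    (∀ n, image (d n) ∈ leftPerp S)}

/-- a wakamatsu tilting subcategory. -/
def WakamatsuTilting (S : Set 𝒟) : Prop :=
  SelfOrthogonal S ∧ ∀ P : 𝒟, Projective P → P ∈ wakClass S

end Ext

/-- `Fac S`. -/
def Fac (S : Set 𝒟) : Set 𝒟 :=
  {X | ∃ M ∈ S, ∃ f : M ⟶ X, Epi f}

/-- `f : A ⟶ M` is a left `S`-approximation of `A`. -/
def IsLeftApprox (S : Set 𝒟) {A M : 𝒟} (f : A ⟶ M) : Prop :=
  M ∈ S ∧ ∀ M' ∈ S, ∀ g : A ⟶ M', ∃ h : M ⟶ M', f ≫ h = g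

/-- `f : M ⟶ A` is a right `S`-approximation of `A`. -/
def IsRightApprox (S : Set 𝒟) {M A : 𝒟} (f : M ⟶ A) : Prop :=
  M ∈ S ∧ ∀ M' ∈ S, ∀ g : M' ⟶ A, ∃ h : M' ⟶ M, h ≫ f = g

/-- a contravariantly finite subcategory. -/
def ContravariantlyFinite (S : Set 𝒟) : Prop :=
  ∀ A : 𝒟, ∃ (M : 𝒟) (f : M ⟶ A), IsRightApprox S f

section Ext
variable [HasExt.{w₁} 𝒟]

/-- a weak support τ-tilting subcategory. -/
def WeakSupportTauTilting (S : Set 𝒟) : Prop :=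
  (∀ M ∈ S, ∀ L ∈ Fac S, Subsingleton (Ext M L 1)) ∧
  ∀ P : 𝒟, Projective P → ∃ (M₀ M₁ : 𝒟) (f : P ⟶ M₀) (g : M₀ ⟶ M₁),
    M₀ ∈ S ∧ M₁ ∈ S ∧ Epi g ∧ ExactAt f g ∧ IsLeftApprox S f

/-- a support τ-tilting subcategory. -/
def SupportTauTilting (S : Set 𝒟) : Prop :=
  WeakSupportTauTilting S ∧ ContravariantlyFinite S

/-- `^⊥₁ S`. -/
def perpOneLeft (S : Set 𝒟) : Set 𝒟 :=
  {A | ∀ M ∈ S, Subsingleton (Ext A M 1)}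

end Ext

/-- `S^⊥₀`. -/
def perpZeroRight (S : Set 𝒟) : Set 𝒟 :=
  {A | ∀ M ∈ S, ∀ f : M ⟶ A, f = 0}

/-- a torsion pair. -/
def TorsionPair (T F : Set 𝒟) : Prop :=
  (∀ X ∈ T, ∀ Y ∈ F, ∀ f : X ⟶ Y, f = 0) ∧
  ∀ B : 𝒟, ∃ (X Y : 𝒟) (f : X ⟶ B) (g : B ⟶ Y),
    X ∈ T ∧ Y ∈ F ∧ Mono f ∧ Epi g ∧ ExactAt f g

/-- a τ-cotorsion torsion triple. -/
def TauCotorsionTorsionTriple [HasExt.{w₁} 𝒟] (L D F : Set 𝒟) : Prop :=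
  L = perpOneLeft D ∧
  (∀ P : 𝒟, Projective P → ∃ (D₀ C₀ : 𝒟) (f : P ⟶ D₀) (g : D₀ ⟶ C₀),
    D₀ ∈ L ∩ D ∧ C₀ ∈ L ∧ Epi g ∧ ExactAt f g ∧ IsLeftApprox D f) ∧
  ContravariantlyFinite (L ∩ D) ∧ TorsionPair D F

/-- the closure under isomorphism of the image of a subcategory under a functor. -/
def imgCl {𝒟' : Type u₂} [Category.{v₂} 𝒟'] (F : 𝒟 ⥤ 𝒟') (S : Set 𝒟) : Set 𝒟' :=
  {X | ∃ Y ∈ S, Nonempty (F.obj Y ≅ X)}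


section StmtAux

open ZeroObject

universe wa wb va vb ua ub

namespace StmtAux

variable {A : Type ua} {B : Type ub} [Category.{va} A] [Category.{vb} B]
  [Abelian A] [Abelian B]

lemma additiveOfExactLeft (F : A ⥤ B) [PreservesFiniteColimits F] : F.Additive := by
  have h0 : IsInitial (F.obj (0 : A)) :=
    IsInitial.isInitialObj F _ HasZeroObject.zeroIsInitial
  haveI : F.PreservesZeroMorphisms :=
    Functor.preservesZeroMorphisms_of_map_zero_object
      (h0.uniqueUpToIso HasZeroObject.zeroIsInitial)
  haveI : PreservesBinaryBiproducts F :=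
    preservesBinaryBiproducts_of_preservesBinaryCoproducts F
  exact Functor.additive_of_preservesBinaryBiproducts F

lemma additiveOfExactRight (F : A ⥤ B) [PreservesFiniteLimits F] : F.Additive := by
  have h0 : IsTerminal (F.obj (0 : A)) :=
    IsTerminal.isTerminalObj F _ HasZeroObject.zeroIsTerminal
  haveI : F.PreservesZeroMorphisms :=
    Functor.preservesZeroMorphisms_of_map_zero_object
      (h0.uniqueUpToIso HasZeroObject.zeroIsTerminal)
  haveI : PreservesBinaryBiproducts F :=
    preservesBinaryBiproducts_of_preservesBinaryProducts F
  exact Functor.additive_of_preservesBinaryBiproducts F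

/-- The adjunction between functors on cochain complexes induced by an adjunction
of additive functors. -/
noncomputable def adjMapComplex {F : A ⥤ B} {G : B ⥤ A} (adj : F ⊣ G)
    [F.Additive] [G.Additive] :
    F.mapHomologicalComplex (ComplexShape.up ℤ) ⊣
      G.mapHomologicalComplex (ComplexShape.up ℤ) :=
  Adjunction.mkOfUnitCounit
    { unit :=
        { app := fun K =>
            { f := fun i => adj.unit.app (K.X i)
              comm' := fun i j _ => by simp; exact (adj.unit.naturality _).symm }
          naturality := fun K L φ => by ext i; simp; exact adj.unit.naturality _ }
      counit :=
        { app := fun K =>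
            { f := fun i => adj.counit.app (K.X i)
              comm' := fun i j _ => by simp; exact (adj.counit.naturality _).symm }
          naturality := fun K L φ => by ext i; simp; exact adj.counit.naturality _ }
      left_triangle := by ext K i; simp; exact adj.left_triangle_components _
      right_triangle := by ext K i; simp; exact adj.right_triangle_components _ }

/-- extract the degree-0 iso from `singleFunctorsPostcompQIso` -/
noncomputable def singleQIso (C : Type*) [Category C] [Abelian C] [HasDerivedCategory C] :
    DerivedCategory.singleFunctor C 0 ≅
      CochainComplex.singleFunctor C 0 ⋙ DerivedCategory.Q :=
  (SingleFunctors.evaluation (A := ℤ) _ _ 0).mapIso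
    (DerivedCategory.singleFunctorsPostcompQIso C)

/-- The central transfer lemma: an adjunction between exact functors of abelian
categories induces isomorphisms of all Ext groups. -/
lemma extAdjEquiv [HasExt.{wa} A] [HasExt.{wb} B]
    {F : A ⥤ B} {G : B ⥤ A} (adj : F ⊣ G)
    [F.Additive] [G.Additive]
    [PreservesFiniteLimits F] [PreservesFiniteColimits F]
    [PreservesFiniteLimits G] [PreservesFiniteColimits G]
    (X : A) (Y : B) (n : ℕ) :
    Nonempty (Ext (F.obj X) Y n ≃ Ext X (G.obj Y) n) := by
  letI : HasDerivedCategory A := HasDerivedCategory.standard A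
  letI : HasDerivedCategory B := HasDerivedCategory.standard B
  haveI : F.PreservesHomology := Functor.preservesHomologyOfExact F
  haveI : G.PreservesHomology := Functor.preservesHomologyOfExact G
  set Fc := F.mapHomologicalComplex (ComplexShape.up ℤ) with hFc
  set Gc := G.mapHomologicalComplex (ComplexShape.up ℤ) with hGc
  have hF : (HomologicalComplex.quasiIso A (ComplexShape.up ℤ)).IsInvertedBy
      (Fc ⋙ DerivedCategory.Q) := fun K L f hf => by
    have : QuasiIso f := hf
    have : QuasiIso (Fc.map f) :=
      HomologicalComplex.quasiIso_map_of_preservesHomology f F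
    exact inferInstanceAs (IsIso (DerivedCategory.Q.map (Fc.map f)))
  have hG : (HomologicalComplex.quasiIso B (ComplexShape.up ℤ)).IsInvertedBy
      (Gc ⋙ DerivedCategory.Q) := fun K L f hf => by
    have : QuasiIso f := hf
    have : QuasiIso (Gc.map f) :=
      HomologicalComplex.quasiIso_map_of_preservesHomology f G
    exact inferInstanceAs (IsIso (DerivedCategory.Q.map (Gc.map f)))
  set F' := Localization.lift (Fc ⋙ DerivedCategory.Q) hF DerivedCategory.Q with hF'
  set G' := Localization.lift (Gc ⋙ DerivedCategory.Q) hG DerivedCategory.Q with hG'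
  have eF : DerivedCategory.Q ⋙ F' ≅ Fc ⋙ DerivedCategory.Q :=
    Localization.fac _ hF _
  have eG : DerivedCategory.Q ⋙ G' ≅ Gc ⋙ DerivedCategory.Q :=
    Localization.fac _ hG _
  haveI : CatCommSq Fc DerivedCategory.Q DerivedCategory.Q F' := ⟨eF.symm⟩
  haveI : CatCommSq Gc DerivedCategory.Q DerivedCategory.Q G' := ⟨eG.symm⟩
  have adj' : F' ⊣ G' :=
    (adjMapComplex adj).localization DerivedCategory.Q
      (HomologicalComplex.quasiIso A (ComplexShape.up ℤ))
      DerivedCategory.Q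
      (HomologicalComplex.quasiIso B (ComplexShape.up ℤ)) F' G'
  haveI : G'.CommShift ℤ :=
    Functor.commShiftOfLocalization DerivedCategory.Q
      (HomologicalComplex.quasiIso B (ComplexShape.up ℤ)) ℤ
      (Gc ⋙ DerivedCategory.Q) G'
  have uF : (DerivedCategory.singleFunctor B 0).obj (F.obj X) ≅
      F'.obj ((DerivedCategory.singleFunctor A 0).obj X) :=
    (singleQIso B).app (F.obj X) ≪≫
      DerivedCategory.Q.mapIso
        (((HomologicalComplex.singleMapHomologicalComplex F
          (ComplexShape.up ℤ) 0).app X).symm) ≪≫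
      eF.symm.app _ ≪≫ F'.mapIso (((singleQIso A).app X).symm)
  have uG : G'.obj ((DerivedCategory.singleFunctor B 0).obj Y) ≅
      (DerivedCategory.singleFunctor A 0).obj (G.obj Y) :=
    G'.mapIso ((singleQIso B).app Y) ≪≫ eG.app _ ≪≫
      DerivedCategory.Q.mapIso
        ((HomologicalComplex.singleMapHomologicalComplex G (ComplexShape.up ℤ) 0).app Y) ≪≫
      ((singleQIso A).app (G.obj Y)).symm
  refine ⟨Ext.homEquiv.trans (Equiv.trans ?_ Ext.homEquiv.symm)⟩
  exact (uF.homFromEquiv).trans <|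
    (adj'.homEquiv _ _).trans <|
    ((G'.commShiftIso (n : ℤ)).app _).homToEquiv.trans <|
    ((shiftFunctor (DerivedCategory A) (n : ℤ)).mapIso uG).homToEquiv

/-- transport of `Subsingleton (Ext ...)` along isos. -/
lemma extSubsingletonOfIso [HasExt.{wa} A] {X X' Y Y' : A} (e : X ≅ X') (e' : Y ≅ Y') (n : ℕ)
    (h : Subsingleton (Ext X Y n)) : Subsingleton (Ext X' Y' n) := by
  letI : HasDerivedCategory A := HasDerivedCategory.standard A
  refine (Ext.homEquiv (X := X') (Y := Y') (n := n)).subsingleton_congr.mpr ?_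
  have : Subsingleton (ShiftedHom ((DerivedCategory.singleFunctor A 0).obj X)
      ((DerivedCategory.singleFunctor A 0).obj Y) (n : ℤ)) :=
    (Ext.homEquiv (X := X) (Y := Y) (n := n)).symm.subsingleton_congr.mpr h
  exact Equiv.subsingleton_congr
    ((((DerivedCategory.singleFunctor A 0).mapIso e).homFromEquiv).trans
      (((shiftFunctor (DerivedCategory A) (n : ℤ)).mapIso
        ((DerivedCategory.singleFunctor A 0).mapIso e')).homToEquiv)) |>.mp this

end StmtAux

open StmtAux in
/-- transfer of the wakamatsu tilting property along a suitable adjunction. -/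
lemma wakamatsuTransfer {ℬ : Type ua} {𝒟 : Type ub}
    [Category.{va} ℬ] [Category.{vb} 𝒟]
    [Abelian ℬ] [Abelian 𝒟] [HasExt.{wa} ℬ] [HasExt.{wb} 𝒟]
    (Φ : ℬ ⥤ 𝒟) (Ψ : 𝒟 ⥤ ℬ) (adjΨ : Ψ ⊣ Φ)
    [PreservesFiniteLimits Φ] [PreservesFiniteColimits Φ]
    [Ψ.Full] [Ψ.Faithful]
    (𝒴 : Set ℬ) (hwt : WakamatsuTilting 𝒴)
    (T : ∀ B ∈ leftPerp 𝒴, ∀ Z ∈ 𝒴, ∀ i : ℕ, 1 ≤ i →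
      Subsingleton (Ext (Φ.obj B) (Φ.obj Z) i)) :
    WakamatsuTilting (imgCl Φ 𝒴) := by
  haveI : Φ.Additive := additiveOfExactLeft Φ
  haveI : Φ.PreservesHomology := Functor.preservesHomologyOfExact Φ
  have hsub : 𝒴 ⊆ leftPerp 𝒴 := fun M hM N hN i hi => hwt.1 M hM N hN i hi
  -- membership of images under Φ in the left perp
  have memPerp : ∀ B ∈ leftPerp 𝒴, Φ.obj B ∈ leftPerp (imgCl Φ 𝒴) := by
    intro B hB N hN i hi
    obtain ⟨Z, hZ, ⟨e⟩⟩ := hN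
    exact extSubsingletonOfIso (Iso.refl _) e i (T B hB Z hZ i hi)
  constructor
  · -- self-orthogonality
    intro M hM N hN i hi
    obtain ⟨Z₁, hZ₁, ⟨e₁⟩⟩ := hM
    obtain ⟨Z₂, hZ₂, ⟨e₂⟩⟩ := hN
    exact extSubsingletonOfIso e₁ e₂ i (T Z₁ (hsub hZ₁) Z₂ hZ₂ i hi)
  · -- projectives are in the wakamatsu class
    intro P hP
    have hΨP : Projective (Ψ.obj P) := adjΨ.map_projective P hP
    obtain ⟨hperp, W, f, d, hW, hmono, hex0, hexn, him⟩ := hwt.2 (Ψ.obj P) hΨP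
    have η : P ≅ Φ.obj (Ψ.obj P) := asIso (adjΨ.unit.app P)
    refine ⟨?_, fun n => Φ.obj (W n), η.hom ≫ Φ.map f, fun n => Φ.map (d n),
      fun n => ⟨W n, hW n, ⟨Iso.refl _⟩⟩, ?_, ?_, ?_, ?_⟩
    · -- P ∈ leftPerp
      intro N hN i hi
      exact extSubsingletonOfIso η.symm (Iso.refl N) i (memPerp (Ψ.obj P) hperp N hN i hi)
    · -- mono
      haveI := hmono
      haveI : Mono (Φ.map f) := inferInstance
      exact mono_comp _ _
    · -- exactness at W' 0
      obtain ⟨w0, hx0⟩ := hex0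
      refine ⟨by rw [Category.assoc, ← Φ.map_comp, w0, Φ.map_zero, comp_zero], ?_⟩
      refine ShortComplex.exact_of_iso ?_ (hx0.map Φ)
      exact ShortComplex.isoMk η.symm (Iso.refl _) (Iso.refl _) (by simp; erw [Iso.inv_hom_id_assoc, Category.comp_id])
        (by simp; erw [Category.id_comp, Category.comp_id])
    · -- exactness of the complex
      intro n
      obtain ⟨wn, hxn⟩ := hexn n
      exact ⟨by rw [← Φ.map_comp, wn, Φ.map_zero], hxn.map Φ⟩
    · -- the images are in the left perp
      intro n
      have him' : image (Φ.map (d n)) ∈ leftPerp (imgCl Φ 𝒴) := by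
        have e : Φ.obj (image (d n)) ≅ image (Φ.map (d n)) := by
          haveI : Epi (Φ.map (factorThruImage (d n))) := inferInstance
          haveI : StrongEpi (Φ.map (factorThruImage (d n))) := strongEpi_of_epi _
          haveI : Mono (Φ.map (Limits.image.ι (d n))) := inferInstance
          exact image.isoStrongEpiMono (Φ.map (factorThruImage (d n)))
            (Φ.map (Limits.image.ι (d n))) (by rw [← Φ.map_comp, Limits.image.fac])
        intro N hN i hi
        exact extSubsingletonOfIso e (Iso.refl N) i
          (memPerp (image (d n)) (him n) N hN i hi)
      exact him'

/-- If `𝒴` is a wakamatsu tilting subcategory of `ℬ`, `i^!` is exact, `i_* i^!(⊥𝒴) ⊆ 𝒴` and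
`j_* j^*(𝒴) ⊆ 𝒴`, then `i^!(𝒴)` and `j^*(𝒴)` are wakamatsu tilting subcategories of
`𝒜` and `𝒞` respectively. -/
theorem stmt_2
    {𝒜 : Type u₁} {ℬ : Type u₂} {𝒞 : Type u₃}
    [Category.{v₁} 𝒜] [Category.{v₂} ℬ] [Category.{v₃} 𝒞]
    [Abelian 𝒜] [Abelian ℬ] [Abelian 𝒞]
    [EnoughProjectives 𝒜] [EnoughInjectives 𝒜]
    [EnoughProjectives ℬ] [EnoughInjectives ℬ]
    [EnoughProjectives 𝒞] [EnoughInjectives 𝒞]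
    [HasExt.{w₁} 𝒜] [HasExt.{w₂} ℬ] [HasExt.{w₃} 𝒞]
    (R : Recollement 𝒜 ℬ 𝒞)
    (𝒴 : Set ℬ) (good : IsGoodSubcat 𝒴)
    (hwt : WakamatsuTilting 𝒴)
    [PreservesFiniteLimits R.iUE] [PreservesFiniteColimits R.iUE]
    (h₁ : ∀ Y ∈ leftPerp 𝒴, R.iStar.obj (R.iUE.obj Y) ∈ 𝒴)
    (h₂ : ∀ Y ∈ 𝒴, R.jLS.obj (R.jUS.obj Y) ∈ 𝒴) :
    WakamatsuTilting (imgCl R.iUE 𝒴) ∧ WakamatsuTilting (imgCl R.jUS 𝒴) := by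
  haveI := R.iStar_full; haveI := R.iStar_faithful
  haveI := R.jLE_full; haveI := R.jLE_faithful
  haveI := R.jLS_full; haveI := R.jLS_faithful
  haveI : PreservesFiniteLimits R.iStar := by
    haveI : PreservesLimitsOfSize.{0,0} R.iStar := R.adj₁.rightAdjoint_preservesLimits
    exact PreservesLimitsOfSize.preservesFiniteLimits _
  haveI : PreservesFiniteColimits R.iStar := by
    haveI : PreservesColimitsOfSize.{0,0} R.iStar := R.adj₂.leftAdjoint_preservesColimits
    exact PreservesColimitsOfSize.preservesFiniteColimits _
  haveI : PreservesFiniteLimits R.jUS := by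
    haveI : PreservesLimitsOfSize.{0,0} R.jUS := R.adj₃.rightAdjoint_preservesLimits
    exact PreservesLimitsOfSize.preservesFiniteLimits _
  haveI : PreservesFiniteColimits R.jUS := by
    haveI : PreservesColimitsOfSize.{0,0} R.jUS := R.adj₄.leftAdjoint_preservesColimits
    exact PreservesColimitsOfSize.preservesFiniteColimits _
  haveI : PreservesFiniteLimits R.jLS := by
    haveI : PreservesLimitsOfSize.{0,0} R.jLS := R.adj₄.rightAdjoint_preservesLimits
    exact PreservesLimitsOfSize.preservesFiniteLimits _
  haveI : R.iStar.Additive := StmtAux.additiveOfExactLeft _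
  haveI : R.iUE.Additive := StmtAux.additiveOfExactLeft _
  haveI : R.jUS.Additive := StmtAux.additiveOfExactLeft _
  -- `i^! ∘ j_*` vanishes
  have hiUEjLS : ∀ X : 𝒞, IsZero (R.iUE.obj (R.jLS.obj X)) := by
    intro X
    rw [IsZero.iff_id_eq_zero]
    have hz : IsZero (R.jUS.obj (R.iStar.obj (R.iUE.obj (R.jLS.obj X)))) :=
      (R.essImage_iStar _).mp ⟨_, ⟨Iso.refl _⟩⟩
    apply (R.adj₂.homEquiv _ _).symm.injective
    apply (R.adj₄.homEquiv _ _).symm.injective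
    exact hz.eq_of_src _ _
  -- `j_*` is exact since `i^!` is exact
  haveI : R.jLS.Additive := StmtAux.additiveOfExactRight _
  haveI : PreservesFiniteColimits R.jLS := by
    have h03 := (Functor.preservesFiniteColimits_tfae R.jLS).out 0 3
    apply h03.mp
    intro S hS
    constructor
    · have h30 := (Functor.preservesFiniteLimits_tfae R.jLS).out 3 0
      exact (h30.mp inferInstance S hS).1
    · haveI := hS.epi_g
      have hQ1 : IsZero (R.jUS.obj (cokernel (R.jLS.map S.g))) := by
        have hepi : Epi (R.jUS.map (R.jLS.map S.g)) := by
          have hnat := R.adj₄.counit.naturality S.g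
          simp only [Functor.comp_map, Functor.id_map] at hnat
          have heq : R.jUS.map (R.jLS.map S.g) =
              R.adj₄.counit.app S.X₂ ≫ S.g ≫ inv (R.adj₄.counit.app S.X₃) := by
            rw [← cancel_mono (R.adj₄.counit.app S.X₃), Category.assoc, Category.assoc,
              IsIso.inv_hom_id, Category.comp_id]
            exact hnat
          rw [heq]
          infer_instance
        exact IsZero.of_iso (IsZero.of_iso (isZero_zero _) (cokernel.ofEpi _))
          (PreservesCokernel.iso R.jUS (R.jLS.map S.g))
    
      have hQ2 : IsZero (R.iUE.obj (cokernel (R.jLS.map S.g))) := by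
        have hz3 := hiUEjLS S.X₃
        have hcz : IsZero (cokernel (R.iUE.map (R.jLS.map S.g))) := by
          rw [IsZero.iff_id_eq_zero, ← cancel_epi (cokernel.π (R.iUE.map (R.jLS.map S.g))),
            Category.comp_id, comp_zero]
          exact hz3.eq_of_src _ _
        exact IsZero.of_iso hcz (PreservesCokernel.iso R.iUE (R.jLS.map S.g))
      obtain ⟨Aq, ⟨eA⟩⟩ := (R.essImage_iStar _).mpr hQ1
      have hA : IsZero Aq := by
        have h' : IsZero (R.iUE.obj (R.iStar.obj Aq)) := IsZero.of_iso hQ2 (R.iUE.mapIso eA)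
        exact IsZero.of_iso h' (asIso (R.adj₂.unit.app Aq))
      have hQk : IsZero (cokernel (R.jLS.map S.g)) :=
        IsZero.of_iso (R.iStar.map_isZero hA) eA.symm
      exact epi_of_cokernel_π_eq_zero _ (hQk.eq_of_tgt _ _)
  constructor
  · refine wakamatsuTransfer R.iUE R.iStar R.adj₂ 𝒴 hwt ?_
    intro B hB Z hZ i hi
    obtain ⟨e⟩ := StmtAux.extAdjEquiv R.adj₂ (R.iUE.obj B) Z i
    exact e.subsingleton_congr.mp (hwt.1 _ (h₁ B hB) Z hZ i hi)
  · refine wakamatsuTransfer R.jUS R.jLE R.adj₃ 𝒴 hwt ?_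
    intro B hB Z hZ i hi
    obtain ⟨e⟩ := StmtAux.extAdjEquiv R.adj₄ B (R.jUS.obj Z) i
    exact e.subsingleton_congr.mpr (hB _ (h₂ Z hZ) i hi)
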